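/- arXiv:1012.4998 — 3 statements merged into one kernel-verified Lean document; each statement's English description precedes it below -/
import Mathlib

section
/- On the space of Cl(0,m)-valued polynomials, the commutator identities [∂^+, x^{2j}] = -2j x^{2(j-1)}(x∧) and [∂^-, x^{2j}] = -2j x^{2(j-1)}(x•) hold, where x^2 denotes multiplication by the Clifford square of the vector variable (equal to -|x|^2). -/
noncomputable section
open scoped TensorProduct
open CliffordAlgebra MvPolynomial

/-- The quadratic form of signature (0,m): Q(x) = -|x|². -/
def Qf (m : ℕ) : QuadraticForm ℝ (Fin m → ℝ) :=
  - QuadraticMap.weightedSumSquares ℝ (fun _ : Fin m => (1 : ℝ))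

/-- The real Clifford algebra Cl(0,m). -/
abbrev Cl (m : ℕ) := CliffordAlgebra (Qf m)

/-- The generators e₁,…,e_m. -/
def e (m : ℕ) (i : Fin m) : Cl m := CliffordAlgebra.ι (Qf m) (Pi.single i 1)

/-- Left outer (wedge) multiplication by `c`:  v ↦ (1/2)(c v + α(v) c). -/
def wedgeL (m : ℕ) (c : Cl m) : Cl m →ₗ[ℝ] Cl m :=
  (1/2 : ℝ) • (LinearMap.mulLeft ℝ c +
    (LinearMap.mulRight ℝ c) ∘ₗ (involute (Q := Qf m)).toLinearMap)

/-- Left inner (dot) multiplication by `c`:  v ↦ (1/2)(c v - α(v) c). -/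
def dotL (m : ℕ) (c : Cl m) : Cl m →ₗ[ℝ] Cl m :=
  (1/2 : ℝ) • (LinearMap.mulLeft ℝ c -
    (LinearMap.mulRight ℝ c) ∘ₗ (involute (Q := Qf m)).toLinearMap)

/-- Scalar polynomials on ℝ^m. -/
abbrev Pm (m : ℕ) := MvPolynomial (Fin m) ℝ

/-- The space P* of Cl(0,m)-valued polynomials on ℝ^m. -/
abbrev MS (m : ℕ) := Pm m ⊗[ℝ] Cl m

/-- Build an operator on Cl-valued polynomials from operators on each factor. -/
def op (m : ℕ) (f : Pm m →ₗ[ℝ] Pm m) (g : Cl m →ₗ[ℝ] Cl m) : Module.End ℝ (MS m) :=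
  TensorProduct.map f g

/-- The operator (x∧) of outer multiplication by the vector variable. -/
def xWedge (m : ℕ) : Module.End ℝ (MS m) :=
  ∑ j : Fin m, op m (LinearMap.mulLeft ℝ (X j)) (wedgeL m (e m j))

/-- The operator (x•) of inner multiplication by the vector variable. -/
def xDot (m : ℕ) : Module.End ℝ (MS m) :=
  ∑ j : Fin m, op m (LinearMap.mulLeft ℝ (X j)) (dotL m (e m j))

/-- Left Clifford multiplication by the vector variable x. -/
def Xmul (m : ℕ) : Module.End ℝ (MS m) :=
  ∑ j : Fin m, op m (LinearMap.mulLeft ℝ (X j)) (LinearMap.mulLeft ℝ (e m j))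

/-- The Dirac operator ∂ = Σ e_j ∂_{x_j}. -/
def Dirac (m : ℕ) : Module.End ℝ (MS m) :=
  ∑ j : Fin m, op m (pderiv j).toLinearMap (LinearMap.mulLeft ℝ (e m j))

/-- The exterior part ∂⁺ of the Dirac operator. -/
def dplus (m : ℕ) : Module.End ℝ (MS m) :=
  ∑ j : Fin m, op m (pderiv j).toLinearMap (wedgeL m (e m j))

/-- The interior part ∂⁻ of the Dirac operator. -/
def dminus (m : ℕ) : Module.End ℝ (MS m) :=
  ∑ j : Fin m, op m (pderiv j).toLinearMap (dotL m (e m j))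

/-- The Euler operator E = Σ x_j ∂_{x_j}. -/
def Euler (m : ℕ) : Module.End ℝ (MS m) :=
  ∑ j : Fin m, op m (LinearMap.mulLeft ℝ (X j) ∘ₗ (pderiv j).toLinearMap) LinearMap.id

/-- The fermionic Euler operator ∂⁺⌋ = -Σ (e_j∧)(e_j•). -/
def fermPlus (m : ℕ) : Module.End ℝ (MS m) :=
  - ∑ j : Fin m, op m LinearMap.id (wedgeL m (e m j) ∘ₗ dotL m (e m j))

/-- The fermionic Euler operator ∂⁻⌋ = -Σ (e_j•)(e_j∧). -/
def fermMinus (m : ℕ) : Module.End ℝ (MS m) :=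
  - ∑ j : Fin m, op m LinearMap.id (dotL m (e m j) ∘ₗ wedgeL m (e m j))

/-- The Laplacian Δ = Σ ∂_{x_j}². -/
def Lap (m : ℕ) : Module.End ℝ (MS m) :=
  ∑ j : Fin m, op m ((pderiv j).toLinearMap ∘ₗ (pderiv j).toLinearMap) LinearMap.id

/-- Multiplication by the Clifford square x² = -(x₁²+⋯+x_m²) of the vector variable. -/
def Mx2 (m : ℕ) : Module.End ℝ (MS m) :=
  op m (LinearMap.mulLeft ℝ (-(∑ j : Fin m, (X j : Pm m) ^ 2))) LinearMap.id

/-- The space Cl^s of s-vectors: the span of products of s distinct generators. -/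
def clGrade (m s : ℕ) : Submodule ℝ (Cl m) :=
  Submodule.span ℝ
    {x | ∃ l : List (Fin m), l.length = s ∧ l.Nodup ∧ x = (l.map (e m)).prod}

/-- The space P_k^s of k-homogeneous s-vector valued polynomials. -/
def Pks (m k s : ℕ) : Submodule ℝ (MS m) :=
  LinearMap.range (TensorProduct.map
    (MvPolynomial.homogeneousSubmodule (Fin m) ℝ k).subtype (clGrade m s).subtype)

/-- The space of s-vector valued polynomials (no homogeneity). -/
def PsVal (m s : ℕ) : Submodule ℝ (MS m) :=
  LinearMap.range (TensorProduct.map (LinearMap.id : Pm m →ₗ[ℝ] Pm m) (clGrade m s).subtype)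

/-- Homogeneous solutions of the Hodge–de Rham system: ∂⁺P = 0 and ∂⁻P = 0. -/
def Hks (m k s : ℕ) : Submodule ℝ (MS m) :=
  Pks m k s ⊓ LinearMap.ker (dplus m) ⊓ LinearMap.ker (dminus m)

/-- Homogeneous s-vector valued monogenic polynomials: ∂P = 0. -/
def HksD (m k s : ℕ) : Submodule ℝ (MS m) :=
  Pks m k s ⊓ LinearMap.ker (Dirac m)

/-- Ker_k^s ∂⁺. -/
def KerP (m k s : ℕ) : Submodule ℝ (MS m) :=
  Pks m k s ⊓ LinearMap.ker (dplus m)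

/-- Ker_k^s ∂⁻. -/
def KerM (m k s : ℕ) : Submodule ℝ (MS m) :=
  Pks m k s ⊓ LinearMap.ker (dminus m)

end

noncomputable section Aux
open scoped TensorProduct
open CliffordAlgebra MvPolynomial

lemma map_sub_left {M N : Type*} [AddCommGroup M] [AddCommGroup N] [Module ℝ M] [Module ℝ N]
    (f f' : M →ₗ[ℝ] M) (g : N →ₗ[ℝ] N) :
    TensorProduct.map (f - f') g = TensorProduct.map f g - TensorProduct.map f' g := by
  ext p c; simp [TensorProduct.sub_tmul]

lemma map_smul_left' {M N : Type*} [AddCommGroup M] [AddCommGroup N] [Module ℝ M] [Module ℝ N]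
    (c : ℝ) (f : M →ₗ[ℝ] M) (g : N →ₗ[ℝ] N) :
    TensorProduct.map (c • f) g = c • TensorProduct.map f g := by
  ext p x; simp [TensorProduct.smul_tmul']

lemma op_mul (m : ℕ) (f f' : Pm m →ₗ[ℝ] Pm m) (g g' : Cl m →ₗ[ℝ] Cl m) :
    op m f g * op m f' g' = op m (f ∘ₗ f') (g ∘ₗ g') := by
  simp only [op, Module.End.mul_eq_comp, TensorProduct.map_comp]

lemma pderiv_r (m : ℕ) (i : Fin m) :
    (pderiv i) (-(∑ k : Fin m, (X k : Pm m) ^ 2)) = -(2 * X i) := by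
  simp [pderiv_X, Pi.single_apply, mul_ite, Finset.sum_ite_eq']

lemma sum_comm_sub {V : Type*} [AddCommGroup V] [Module ℝ V] {ι : Type*} [Fintype ι]
    (a : ι → Module.End ℝ V) (M : Module.End ℝ V) :
    (∑ i, a i) * M - M * ∑ i, a i = ∑ i, (a i * M - M * a i) := by
  rw [Finset.sum_mul, Finset.mul_sum]
  rw [Finset.sum_sub_distrib]

lemma comm_gen (m : ℕ) (g : Fin m → (Cl m →ₗ[ℝ] Cl m)) :
    (∑ i, op m (pderiv i).toLinearMap (g i)) * Mx2 m
      - Mx2 m * (∑ i, op m (pderiv i).toLinearMap (g i))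
      = (-2 : ℝ) • ∑ i, op m (LinearMap.mulLeft ℝ (X i)) (g i) := by
  have hi : ∀ i : Fin m,
      op m (pderiv i).toLinearMap (g i) * Mx2 m - Mx2 m * op m (pderiv i).toLinearMap (g i)
        = (-2 : ℝ) • op m (LinearMap.mulLeft ℝ (X i)) (g i) := by
    intro i
    rw [Mx2, op_mul, op_mul, LinearMap.comp_id, LinearMap.id_comp]
    have h1 : (pderiv i).toLinearMap ∘ₗ LinearMap.mulLeft ℝ (-(∑ k : Fin m, (X k : Pm m) ^ 2))
        - LinearMap.mulLeft ℝ (-(∑ k : Fin m, (X k : Pm m) ^ 2)) ∘ₗ (pderiv i).toLinearMap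
        = (-2 : ℝ) • LinearMap.mulLeft ℝ (X i) := by
      apply LinearMap.ext; intro p
      simp only [LinearMap.sub_apply, LinearMap.comp_apply, LinearMap.smul_apply,
        LinearMap.mulLeft_apply, Derivation.coeFn_coe]
      rw [pderiv_mul, pderiv_r]
      have h2 : (C (-2) : Pm m) = -2 := by
        rw [map_neg, map_ofNat]
      rw [smul_eq_C_mul, h2]
      ring
    calc op m ((pderiv i).toLinearMap ∘ₗ LinearMap.mulLeft ℝ (-(∑ k : Fin m, (X k : Pm m) ^ 2))) (g i)
          - op m (LinearMap.mulLeft ℝ (-(∑ k : Fin m, (X k : Pm m) ^ 2)) ∘ₗ (pderiv i).toLinearMap) (g i)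
        = op m ((pderiv i).toLinearMap ∘ₗ LinearMap.mulLeft ℝ (-(∑ k : Fin m, (X k : Pm m) ^ 2))
            - LinearMap.mulLeft ℝ (-(∑ k : Fin m, (X k : Pm m) ^ 2)) ∘ₗ (pderiv i).toLinearMap) (g i) :=
          (map_sub_left _ _ _).symm
      _ = op m ((-2 : ℝ) • LinearMap.mulLeft ℝ (X i)) (g i) := by rw [h1]
      _ = (-2 : ℝ) • op m (LinearMap.mulLeft ℝ (X i)) (g i) := map_smul_left' _ _ _
  calc (∑ i, op m (pderiv i).toLinearMap (g i)) * Mx2 m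
        - Mx2 m * (∑ i, op m (pderiv i).toLinearMap (g i))
      = ∑ i, (op m (pderiv i).toLinearMap (g i) * Mx2 m
          - Mx2 m * op m (pderiv i).toLinearMap (g i)) := sum_comm_sub _ _
    _ = ∑ i, (-2 : ℝ) • op m (LinearMap.mulLeft ℝ (X i)) (g i) :=
        Finset.sum_congr rfl fun i _ => hi i
    _ = (-2 : ℝ) • ∑ i, op m (LinearMap.mulLeft ℝ (X i)) (g i) := (Finset.smul_sum).symm

lemma Mx2_comm (m : ℕ) (g : Fin m → (Cl m →ₗ[ℝ] Cl m)) :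
    Mx2 m * (∑ i, op m (LinearMap.mulLeft ℝ (X i)) (g i))
      = (∑ i, op m (LinearMap.mulLeft ℝ (X i)) (g i)) * Mx2 m := by
  rw [Finset.mul_sum, Finset.sum_mul]
  refine Finset.sum_congr rfl fun i _ => ?_
  rw [Mx2, op_mul, op_mul, LinearMap.comp_id, LinearMap.id_comp,
    ← LinearMap.mulLeft_mul, ← LinearMap.mulLeft_mul, mul_comm]

lemma dplus_comm (m : ℕ) : dplus m * Mx2 m - Mx2 m * dplus m = (-2 : ℝ) • xWedge m :=
  comm_gen m fun i => wedgeL m (e m i)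

lemma dminus_comm (m : ℕ) : dminus m * Mx2 m - Mx2 m * dminus m = (-2 : ℝ) • xDot m :=
  comm_gen m fun i => dotL m (e m i)

lemma xWedge_Mx2 (m : ℕ) : Mx2 m * xWedge m = xWedge m * Mx2 m :=
  Mx2_comm m fun i => wedgeL m (e m i)

lemma xDot_Mx2 (m : ℕ) : Mx2 m * xDot m = xDot m * Mx2 m :=
  Mx2_comm m fun i => dotL m (e m i)

lemma key' {V : Type*} [AddCommGroup V] [Module ℝ V] (A B C : Module.End ℝ V)
    (hAB : A * B - B * A = C) (hBC : B * C = C * B) (n : ℕ) :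
    A * B ^ (n + 1) - B ^ (n + 1) * A = ((n : ℝ) + 1) • (B ^ n * C) := by
  induction n with
  | zero => simpa using hAB
  | succ n ih =>
    have e1 : A * B ^ (n + 1 + 1) - B ^ (n + 1 + 1) * A
        = (A * B ^ (n + 1) - B ^ (n + 1) * A) * B + B ^ (n + 1) * (A * B - B * A) := by
      simp only [pow_succ]; noncomm_ring
    rw [e1, ih, hAB, smul_mul_assoc]
    have e2 : B ^ n * C * B = B ^ (n + 1) * C := by
      rw [mul_assoc, ← hBC, ← mul_assoc, ← pow_succ]
    rw [e2]
    push_cast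
    module

lemma gkey {V : Type*} [AddCommGroup V] [Module ℝ V] (A B C : Module.End ℝ V)
    (hAB : A * B - B * A = (-2 : ℝ) • C) (hBC' : B * C = C * B) (j : ℕ) :
    A * B ^ j - B ^ j * A = -((2 * (j : ℝ)) • (B ^ (j - 1) * C)) := by
  cases j with
  | zero => simp
  | succ n =>
    have hBC : B * ((-2 : ℝ) • C) = ((-2 : ℝ) • C) * B := by
      rw [mul_smul_comm, smul_mul_assoc, hBC']
    rw [key' A B ((-2 : ℝ) • C) hAB hBC n, mul_smul_comm]
    have hn : n + 1 - 1 = n := rfl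
    rw [hn]
    push_cast
    module

end Aux

/-- [∂⁺, x^{2j}] = -2j x^{2(j-1)}(x∧) and [∂⁻, x^{2j}] = -2j x^{2(j-1)}(x•). -/
theorem stmt10 (m j : ℕ) :
    dplus m * Mx2 m ^ j - Mx2 m ^ j * dplus m =
      -((2 * j : ℝ) • (Mx2 m ^ (j - 1) * xWedge m)) ∧
    dminus m * Mx2 m ^ j - Mx2 m ^ j * dminus m =
      -((2 * j : ℝ) • (Mx2 m ^ (j - 1) * xDot m)) :=
  ⟨gkey (dplus m) (Mx2 m) (xWedge m) (dplus_comm m) (xWedge_Mx2 m) j,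
   gkey (dminus m) (Mx2 m) (xDot m) (dminus_comm m) (xDot_Mx2 m) j⟩
end

section
/- On k-homogeneous Cl^s-valued polynomials, the commutator identity [∂^+, x^{2j+1}(x•)] = x^{2j}(x∧)A holds, where A = E + ∂^+⌋; similarly [∂^-, x^{2j+1}(x∧)] = x^{2j}(x•)B with B = E + ∂^-⌋. -/
set_option maxHeartbeats 1000000
set_option synthInstance.maxHeartbeats 400000

noncomputable section AuxStmt11
open scoped TensorProduct
open CliffordAlgebra MvPolynomial

namespace AuxStmt11

variable {m : ℕ}

/-! ### op lemmas -/

lemma op_mul (f f' : Pm m →ₗ[ℝ] Pm m) (g g' : Cl m →ₗ[ℝ] Cl m) :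
    op m f g * op m f' g' = op m (f * f') (g * g') := by
  unfold op
  rw [Module.End.mul_eq_comp, Module.End.mul_eq_comp, Module.End.mul_eq_comp]
  rw [TensorProduct.map_comp]

lemma op_add_left (f f' : Pm m →ₗ[ℝ] Pm m) (g : Cl m →ₗ[ℝ] Cl m) :
    op m (f + f') g = op m f g + op m f' g := TensorProduct.map_add_left f f' g

lemma op_add_right (f : Pm m →ₗ[ℝ] Pm m) (g g' : Cl m →ₗ[ℝ] Cl m) :
    op m f (g + g') = op m f g + op m f g' := TensorProduct.map_add_right f g g'

lemma op_smul_left (r : ℝ) (f : Pm m →ₗ[ℝ] Pm m) (g : Cl m →ₗ[ℝ] Cl m) :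
    op m (r • f) g = r • op m f g := TensorProduct.map_smul_left r f g

lemma op_smul_right (r : ℝ) (f : Pm m →ₗ[ℝ] Pm m) (g : Cl m →ₗ[ℝ] Cl m) :
    op m f (r • g) = r • op m f g := TensorProduct.map_smul_right r f g

lemma op_neg_right (f : Pm m →ₗ[ℝ] Pm m) (g : Cl m →ₗ[ℝ] Cl m) :
    op m f (-g) = - op m f g := by
  rw [← neg_one_smul ℝ g, op_smul_right]; exact neg_one_smul ℝ (op m f g)

lemma op_sub_right (f : Pm m →ₗ[ℝ] Pm m) (g g' : Cl m →ₗ[ℝ] Cl m) :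
    op m f (g - g') = op m f g - op m f g' := by
  rw [sub_eq_add_neg, op_add_right, op_neg_right]; abel

/-! ### antisymmetric double sums vanish -/

lemma sum_antisym {M : Type*} [AddCommGroup M] [Module ℝ M]
    (a : Fin m → Fin m → M) (h : ∀ i j, a i j = - a j i) :
    (∑ i : Fin m, ∑ j : Fin m, a i j) = 0 := by
  have hS : (∑ i : Fin m, ∑ j : Fin m, a i j) = - ∑ i : Fin m, ∑ j : Fin m, a i j := by
    calc (∑ i : Fin m, ∑ j : Fin m, a i j) = ∑ j : Fin m, ∑ i : Fin m, a i j :=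
          Finset.sum_comm
      _ = ∑ j : Fin m, ∑ i : Fin m, - a j i := by
          exact Finset.sum_congr rfl fun j _ => Finset.sum_congr rfl fun i _ => h i j
      _ = - ∑ j : Fin m, ∑ i : Fin m, a j i := by simp
  have h2 : (2:ℝ) • (∑ i : Fin m, ∑ j : Fin m, a i j) = 0 := by
    rw [two_smul]; nth_rewrite 1 [hS]; exact neg_add_cancel _
  calc (∑ i : Fin m, ∑ j : Fin m, a i j)
      = ((1:ℝ)/2) • ((2:ℝ) • ∑ i : Fin m, ∑ j : Fin m, a i j) := by
        rw [smul_smul]; norm_num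
    _ = 0 := by rw [h2, smul_zero]

/-! ### Clifford generator relations -/

lemma e_mul_e_add (i j : Fin m) :
    e m i * e m j + e m j * e m i = algebraMap ℝ (Cl m) (if i = j then (-2:ℝ) else 0) := by
  rw [e, e, CliffordAlgebra.ι_mul_ι_add_swap]
  congr 1
  simp only [Qf, QuadraticMap.polar, QuadraticMap.neg_apply,
    QuadraticMap.weightedSumSquares_apply, one_smul]
  rcases eq_or_ne i j with h | h
  · subst h
    simp only [Pi.add_apply, Pi.single_apply]
    have h4 : ∀ x : Fin m, ((if x = i then (1:ℝ) else 0) + if x = i then 1 else 0) *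
        ((if x = i then 1 else 0) + if x = i then 1 else 0) = if x = i then 4 else 0 := by
      intro x; split <;> norm_num
    have h1 : ∀ x : Fin m, (if x = i then (1:ℝ) else 0) * (if x = i then 1 else 0)
        = if x = i then 1 else 0 := by
      intro x; split <;> norm_num
    rw [Finset.sum_congr rfl (fun x _ => h4 x), Finset.sum_congr rfl (fun x _ => h1 x),
      Finset.sum_ite_eq']
    norm_num
  · simp only [Pi.add_apply, Pi.single_apply]
    have h5 : ∀ x : Fin m, ((if x = i then (1:ℝ) else 0) + if x = j then 1 else 0) *
        ((if x = i then 1 else 0) + if x = j then 1 else 0)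
        = (if x = i then (1:ℝ) else 0) + (if x = j then 1 else 0) := by
      intro x
      by_cases hxi : x = i <;> by_cases hxj : x = j
      · exact absurd (hxi.symm.trans hxj) h
      all_goals simp [hxi, hxj, h, h.symm]
    have h1 : ∀ (l : Fin m) (x : Fin m), (if x = l then (1:ℝ) else 0) * (if x = l then 1 else 0)
        = if x = l then 1 else 0 := by
      intro l x; split <;> norm_num
    rw [Finset.sum_congr rfl (fun x _ => h5 x), Finset.sum_congr rfl (fun x _ => h1 i x),
      Finset.sum_congr rfl (fun x _ => h1 j x), Finset.sum_add_distrib,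
      Finset.sum_ite_eq', Finset.sum_ite_eq']
    simp [h, Finset.sum_ite_eq']

lemma involute_e (i : Fin m) : involute (Q := Qf m) (e m i) = - e m i := by
  simp [e]

/-! ### Clifford End-level relations -/

def Lm (m : ℕ) (i : Fin m) : Module.End ℝ (Cl m) := LinearMap.mulLeft ℝ (e m i)

def Tm (m : ℕ) (i : Fin m) : Module.End ℝ (Cl m) :=
  (LinearMap.mulRight ℝ (e m i)) ∘ₗ (involute (Q := Qf m)).toLinearMap

lemma wedgeL_eq (i : Fin m) : wedgeL m (e m i) = (1/2 : ℝ) • (Lm m i + Tm m i) := rfl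

lemma dotL_eq (i : Fin m) : dotL m (e m i) = (1/2 : ℝ) • (Lm m i - Tm m i) := rfl

lemma LL (i j : Fin m) : Lm m i * Lm m j + Lm m j * Lm m i
    = (if i = j then (-2:ℝ) else 0) • (1 : Module.End ℝ (Cl m)) := by
  apply LinearMap.ext; intro v
  simp only [Lm, LinearMap.add_apply, Module.End.mul_apply, LinearMap.mulLeft_apply,
    LinearMap.smul_apply, Module.End.one_apply]
  rw [← mul_assoc, ← mul_assoc, ← add_mul, e_mul_e_add, ← Algebra.smul_def]

lemma TT (i j : Fin m) : Tm m i * Tm m j + Tm m j * Tm m i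
    = -((if i = j then (-2:ℝ) else 0) • (1 : Module.End ℝ (Cl m))) := by
  apply LinearMap.ext; intro v
  simp only [Tm, LinearMap.add_apply, Module.End.mul_apply, LinearMap.comp_apply,
    LinearMap.mulRight_apply, AlgHom.toLinearMap_apply, map_mul, involute_involute,
    involute_e, LinearMap.neg_apply, LinearMap.smul_apply, Module.End.one_apply]
  have hre : v * -e m j * e m i + v * -e m i * e m j
      = -(v * (e m j * e m i + e m i * e m j)) := by noncomm_ring
  rw [hre, e_mul_e_add]
  have hij : (if j = i then (-2:ℝ) else 0) = (if i = j then (-2:ℝ) else 0) := by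
    simp [eq_comm]
  rw [hij, ← Algebra.commutes, ← Algebra.smul_def]

lemma LT (i j : Fin m) : Lm m i * Tm m j + Tm m j * Lm m i = 0 := by
  apply LinearMap.ext; intro v
  simp only [Lm, Tm, LinearMap.add_apply, Module.End.mul_apply, LinearMap.comp_apply,
    LinearMap.mulRight_apply, LinearMap.mulLeft_apply, AlgHom.toLinearMap_apply, map_mul,
    involute_e, LinearMap.zero_apply]
  noncomm_ring

lemma ww (i j : Fin m) : wedgeL m (e m i) * wedgeL m (e m j)
    + wedgeL m (e m j) * wedgeL m (e m i) = 0 := by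
  rw [wedgeL_eq, wedgeL_eq, smul_mul_assoc, smul_mul_assoc, mul_smul_comm, mul_smul_comm,
    smul_smul, smul_smul, ← smul_add]
  have expand : (Lm m i + Tm m i) * (Lm m j + Tm m j) + (Lm m j + Tm m j) * (Lm m i + Tm m i)
      = (Lm m i * Lm m j + Lm m j * Lm m i) + ((Tm m i * Tm m j + Tm m j * Tm m i)
        + ((Lm m i * Tm m j + Tm m j * Lm m i) + (Lm m j * Tm m i + Tm m i * Lm m j))) := by
    noncomm_ring
  rw [expand, LL, TT, LT, LT]
  simp

lemma dd (i j : Fin m) : dotL m (e m i) * dotL m (e m j)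
    + dotL m (e m j) * dotL m (e m i) = 0 := by
  rw [dotL_eq, dotL_eq, smul_mul_assoc, smul_mul_assoc, mul_smul_comm, mul_smul_comm,
    smul_smul, smul_smul, ← smul_add]
  have expand : (Lm m i - Tm m i) * (Lm m j - Tm m j) + (Lm m j - Tm m j) * (Lm m i - Tm m i)
      = (Lm m i * Lm m j + Lm m j * Lm m i) + ((Tm m i * Tm m j + Tm m j * Tm m i)
        - ((Lm m i * Tm m j + Tm m j * Lm m i) + (Lm m j * Tm m i + Tm m i * Lm m j))) := by
    simp only [sub_mul, mul_sub, add_mul, mul_add]; abel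
  rw [expand, LL, TT, LT, LT]
  simp

lemma wd (i j : Fin m) : wedgeL m (e m i) * dotL m (e m j)
    + dotL m (e m j) * wedgeL m (e m i)
    = (if i = j then (-1:ℝ) else 0) • (1 : Module.End ℝ (Cl m)) := by
  rw [wedgeL_eq, dotL_eq, smul_mul_assoc, smul_mul_assoc, mul_smul_comm, mul_smul_comm,
    smul_smul, smul_smul, ← smul_add]
  have expand : (Lm m i + Tm m i) * (Lm m j - Tm m j) + (Lm m j - Tm m j) * (Lm m i + Tm m i)
      = (Lm m i * Lm m j + Lm m j * Lm m i) - ((Tm m i * Tm m j + Tm m j * Tm m i)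
        + ((Lm m i * Tm m j + Tm m j * Lm m i) - (Lm m j * Tm m i + Tm m i * Lm m j))) := by
    simp only [sub_mul, mul_sub, add_mul, mul_add]; abel
  rw [expand, LL, TT, LT, LT]
  rcases eq_or_ne i j with h | h <;> simp [h, smul_smul] <;> norm_num <;> module

/-! ### polynomial-side relations -/

lemma pderivL_apply (i : Fin m) (p : Pm m) :
    ((pderiv i).toLinearMap : Module.End ℝ (Pm m)) p = pderiv i p := rfl

lemma DM (i j : Fin m) :
    ((pderiv i).toLinearMap : Module.End ℝ (Pm m)) * LinearMap.mulLeft ℝ (X j)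
    = LinearMap.mulLeft ℝ (X j) * (pderiv i).toLinearMap
      + (if i = j then (1:ℝ) else 0) • (1 : Module.End ℝ (Pm m)) := by
  apply LinearMap.ext; intro p
  simp only [LinearMap.add_apply, Module.End.mul_apply, LinearMap.mulLeft_apply,
    pderivL_apply, LinearMap.smul_apply, Module.End.one_apply]
  rw [pderiv_mul]
  rcases eq_or_ne i j with h | h
  · subst h
    simp [pderiv_X_self, smul_eq_C_mul]
    ring
  · rw [pderiv_X_of_ne h.symm]
    simp [h]

lemma polySym (x y : Fin m) :
    ((pderiv x).toLinearMap : Module.End ℝ (Pm m)) * LinearMap.mulLeft ℝ (X y)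
      + LinearMap.mulLeft ℝ (X x) * (pderiv y).toLinearMap
    = (pderiv y).toLinearMap * LinearMap.mulLeft ℝ (X x)
      + LinearMap.mulLeft ℝ (X y) * (pderiv x).toLinearMap := by
  rw [DM x y, DM y x]
  have hxy : (if x = y then (1:ℝ) else 0) = (if y = x then (1:ℝ) else 0) := by simp [eq_comm]
  rw [hxy]
  abel

lemma Dq (i : Fin m) (q : Pm m) :
    ((pderiv i).toLinearMap : Module.End ℝ (Pm m)) * LinearMap.mulLeft ℝ q
    = LinearMap.mulLeft ℝ q * (pderiv i).toLinearMap + LinearMap.mulLeft ℝ (pderiv i q) := by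
  apply LinearMap.ext; intro p
  simp only [LinearMap.add_apply, Module.End.mul_apply, LinearMap.mulLeft_apply, pderivL_apply]
  rw [pderiv_mul]
  ring

lemma pd_p (i : Fin m) :
    pderiv i (-(∑ j : Fin m, (X j : Pm m) ^ 2)) = (-2:ℝ) • (X i : Pm m) := by
  have hsq : ∀ j : Fin m, pderiv i ((X j : Pm m) ^ 2)
      = if j = i then 2 * (X i : Pm m) else 0 := by
    intro j
    rcases eq_or_ne j i with h | h
    · subst h
      rw [sq, pderiv_mul, pderiv_X_self]
      simp
      ring
    · rw [sq, pderiv_mul, pderiv_X_of_ne h]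
      simp [h]
  rw [map_neg, map_sum, Finset.sum_congr rfl (fun j _ => hsq j), Finset.sum_ite_eq']
  simp [smul_eq_C_mul]
  ring_nf
  exact (map_ofNat C 2).symm

lemma mulLeft_smul (r : ℝ) (q : Pm m) :
    LinearMap.mulLeft ℝ (r • q) = r • (LinearMap.mulLeft ℝ q : Module.End ℝ (Pm m)) := by
  apply LinearMap.ext; intro p
  simp [smul_mul_assoc]

/-! ### MS-level operator identities -/

lemma one_endP : (1 : Module.End ℝ (Pm m)) = LinearMap.id := rfl
lemma one_endC : (1 : Module.End ℝ (Cl m)) = LinearMap.id := rfl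

lemma sum_op_sq_zero (u : Fin m → Module.End ℝ (Cl m))
    (hu : ∀ x y, u x * u y + u y * u x = 0) :
    (∑ x : Fin m, op m (LinearMap.mulLeft ℝ (X x)) (u x)) *
      (∑ y : Fin m, op m (LinearMap.mulLeft ℝ (X y)) (u y)) = 0 := by
  rw [Finset.sum_mul_sum]
  refine sum_antisym (M := Module.End ℝ (MS m)) _ fun x y => ?_
  rw [op_mul, op_mul]
  have hpoly : (LinearMap.mulLeft ℝ (X x) : Module.End ℝ (Pm m)) * LinearMap.mulLeft ℝ (X y)
      = LinearMap.mulLeft ℝ (X y) * LinearMap.mulLeft ℝ (X x) := by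
    rw [Module.End.mul_eq_comp, Module.End.mul_eq_comp, ← LinearMap.mulLeft_mul,
      ← LinearMap.mulLeft_mul, mul_comm]
  have hcl : u x * u y = -(u y * u x) := eq_neg_of_add_eq_zero_left (hu x y)
  rw [hpoly, hcl, op_neg_right]

lemma mixed_same (u : Fin m → Module.End ℝ (Cl m))
    (hu : ∀ x y, u x * u y + u y * u x = 0) :
    (∑ x : Fin m, op m (pderiv x).toLinearMap (u x)) *
      (∑ y : Fin m, op m (LinearMap.mulLeft ℝ (X y)) (u y))
    + (∑ x : Fin m, op m (LinearMap.mulLeft ℝ (X x)) (u x)) *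
      (∑ y : Fin m, op m (pderiv y).toLinearMap (u y)) = 0 := by
  rw [Finset.sum_mul_sum, Finset.sum_mul_sum, ← Finset.sum_add_distrib]
  have step : ∀ x : Fin m,
      ((∑ y : Fin m, op m (pderiv x).toLinearMap (u x) * op m (LinearMap.mulLeft ℝ (X y)) (u y))
      + ∑ y : Fin m, op m (LinearMap.mulLeft ℝ (X x)) (u x) * op m (pderiv y).toLinearMap (u y))
      = ∑ y : Fin m, op m ((pderiv x).toLinearMap * LinearMap.mulLeft ℝ (X y)
          + LinearMap.mulLeft ℝ (X x) * (pderiv y).toLinearMap) (u x * u y) := by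
    intro x
    rw [← Finset.sum_add_distrib]
    refine Finset.sum_congr rfl fun y _ => ?_
    rw [op_mul, op_mul, ← op_add_left]
  rw [Finset.sum_congr rfl fun x _ => step x]
  refine sum_antisym (M := Module.End ℝ (MS m)) _ fun x y => ?_
  rw [polySym x y]
  have hcl : u x * u y = -(u y * u x) := eq_neg_of_add_eq_zero_left (hu x y)
  rw [hcl, op_neg_right]

lemma mixed_opp (u v : Fin m → Module.End ℝ (Cl m))
    (huv : ∀ x y, u x * v y + v y * u x
      = (if x = y then (-1:ℝ) else 0) • (1 : Module.End ℝ (Cl m))) :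
    (∑ x : Fin m, op m (pderiv x).toLinearMap (u x)) *
      (∑ y : Fin m, op m (LinearMap.mulLeft ℝ (X y)) (v y))
    + (∑ x : Fin m, op m (LinearMap.mulLeft ℝ (X x)) (v x)) *
      (∑ y : Fin m, op m (pderiv y).toLinearMap (u y))
    = (∑ x : Fin m, op m LinearMap.id (u x * v x)) - Euler m := by
  rw [Finset.sum_mul_sum, Finset.sum_mul_sum, ← Finset.sum_add_distrib]
  have step : ∀ x : Fin m,
      ((∑ y : Fin m, op m (pderiv x).toLinearMap (u x) * op m (LinearMap.mulLeft ℝ (X y)) (v y))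
      + ∑ y : Fin m, op m (LinearMap.mulLeft ℝ (X x)) (v x) * op m (pderiv y).toLinearMap (u y))
      = (∑ y : Fin m,
          (op m (LinearMap.mulLeft ℝ (X y) * (pderiv x).toLinearMap) (u x * v y)
            - op m (LinearMap.mulLeft ℝ (X x) * (pderiv y).toLinearMap) (u y * v x)))
        + (op m LinearMap.id (u x * v x)
            - op m (LinearMap.mulLeft ℝ (X x) * (pderiv x).toLinearMap) LinearMap.id) := by
    intro x
    rw [← Finset.sum_add_distrib]
    have hy : ∀ y : Fin m,
        op m (pderiv x).toLinearMap (u x) * op m (LinearMap.mulLeft ℝ (X y)) (v y)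
        + op m (LinearMap.mulLeft ℝ (X x)) (v x) * op m (pderiv y).toLinearMap (u y)
        = (op m (LinearMap.mulLeft ℝ (X y) * (pderiv x).toLinearMap) (u x * v y)
            - op m (LinearMap.mulLeft ℝ (X x) * (pderiv y).toLinearMap) (u y * v x))
          + ((if x = y then (1:ℝ) else 0) • op m LinearMap.id (u x * v y)
            + (if y = x then (-1:ℝ) else 0) •
              op m (LinearMap.mulLeft ℝ (X x) * (pderiv y).toLinearMap) LinearMap.id) := by
      intro y
      rw [op_mul, op_mul, DM x y]
      have hv : v x * u y = (if y = x then (-1:ℝ) else 0) • (1 : Module.End ℝ (Cl m))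
          - u y * v x := eq_sub_of_add_eq' (huv y x)
      rw [hv, op_sub_right, op_smul_right, op_add_left, op_smul_left, one_endP, one_endC]
      abel
    rw [Finset.sum_congr rfl fun y _ => hy y, Finset.sum_add_distrib]
    congr 1
    rw [Finset.sum_add_distrib]
    have s1 : (∑ y : Fin m, (if x = y then (1:ℝ) else 0) • op m LinearMap.id (u x * v y))
        = op m LinearMap.id (u x * v x) := by
      have h1 : ∀ y : Fin m, (if x = y then (1:ℝ) else 0) • op m LinearMap.id (u x * v y)
          = if x = y then op m LinearMap.id (u x * v y) else 0 := by
        intro y; split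
        · module
        · module
      rw [Finset.sum_congr rfl fun y _ => h1 y, Finset.sum_ite_eq]
      simp
    have s2 : (∑ y : Fin m, (if y = x then (-1:ℝ) else 0) •
          op m (LinearMap.mulLeft ℝ (X x) * (pderiv y).toLinearMap) LinearMap.id)
        = - op m (LinearMap.mulLeft ℝ (X x) * (pderiv x).toLinearMap) LinearMap.id := by
      have h2 : ∀ y : Fin m, (if y = x then (-1:ℝ) else 0) •
            op m (LinearMap.mulLeft ℝ (X x) * (pderiv y).toLinearMap) LinearMap.id
          = if y = x then
              -op m (LinearMap.mulLeft ℝ (X x) * (pderiv y).toLinearMap) LinearMap.id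
            else 0 := by
        intro y; split
        · module
        · module
      rw [Finset.sum_congr rfl fun y _ => h2 y, Finset.sum_ite_eq']
      simp
    rw [s1, s2]
    abel
  rw [Finset.sum_congr rfl fun x _ => step x, Finset.sum_add_distrib]
  have hanti : (∑ x : Fin m, ∑ y : Fin m,
      (op m (LinearMap.mulLeft ℝ (X y) * (pderiv x).toLinearMap) (u x * v y)
        - op m (LinearMap.mulLeft ℝ (X x) * (pderiv y).toLinearMap) (u y * v x))) = 0 := by
    refine sum_antisym (M := Module.End ℝ (MS m)) _ fun x y => ?_
    abel
  rw [hanti, zero_add]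
  have hE : Euler m = ∑ x : Fin m,
      op m (LinearMap.mulLeft ℝ (X x) * (pderiv x).toLinearMap) LinearMap.id := by
    unfold Euler
    exact Finset.sum_congr rfl fun x _ => by rw [Module.End.mul_eq_comp]
  rw [hE]
  exact Finset.sum_sub_distrib (G := Module.End ℝ (MS m)) _ _

/-! ### named operator identities -/

lemma xWedge_sq : xWedge m * xWedge m = 0 := by
  unfold xWedge; exact sum_op_sq_zero _ ww

lemma xDot_sq : xDot m * xDot m = 0 := by
  unfold xDot; exact sum_op_sq_zero _ dd

lemma dplus_xWedge : dplus m * xWedge m + xWedge m * dplus m = 0 := by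
  unfold dplus xWedge; exact mixed_same _ ww

lemma dminus_xDot : dminus m * xDot m + xDot m * dminus m = 0 := by
  unfold dminus xDot; exact mixed_same _ dd

lemma dplus_xDot : dplus m * xDot m + xDot m * dplus m = -(Euler m + fermPlus m) := by
  unfold dplus xDot
  rw [mixed_opp (fun x => wedgeL m (e m x)) (fun x => dotL m (e m x)) wd]
  unfold fermPlus
  have hc : (∑ x : Fin m, op m LinearMap.id (wedgeL m (e m x) * dotL m (e m x)))
      = ∑ x : Fin m, op m LinearMap.id (wedgeL m (e m x) ∘ₗ dotL m (e m x)) :=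
    Finset.sum_congr rfl fun x _ => by rw [Module.End.mul_eq_comp]
  rw [hc]
  abel

lemma dminus_xWedge : dminus m * xWedge m + xWedge m * dminus m
    = -(Euler m + fermMinus m) := by
  unfold dminus xWedge
  have hdw : ∀ x y : Fin m, dotL m (e m x) * wedgeL m (e m y) + wedgeL m (e m y) * dotL m (e m x)
      = (if x = y then (-1:ℝ) else 0) • (1 : Module.End ℝ (Cl m)) := by
    intro x y
    rw [add_comm, wd y x]
    simp [eq_comm]
  rw [mixed_opp (fun x => dotL m (e m x)) (fun x => wedgeL m (e m x)) hdw]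
  unfold fermMinus
  have hc : (∑ x : Fin m, op m LinearMap.id (dotL m (e m x) * wedgeL m (e m x)))
      = ∑ x : Fin m, op m LinearMap.id (dotL m (e m x) ∘ₗ wedgeL m (e m x)) :=
    Finset.sum_congr rfl fun x _ => by rw [Module.End.mul_eq_comp]
  rw [hc]
  abel

lemma Mx2_comm_sum (u : Fin m → Module.End ℝ (Cl m)) :
    Mx2 m * (∑ x : Fin m, op m (LinearMap.mulLeft ℝ (X x)) (u x))
    = (∑ x : Fin m, op m (LinearMap.mulLeft ℝ (X x)) (u x)) * Mx2 m := by
  unfold Mx2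
  rw [Finset.mul_sum, Finset.sum_mul]
  refine Finset.sum_congr rfl fun x _ => ?_
  rw [op_mul, op_mul]
  have hf : (LinearMap.mulLeft ℝ (-(∑ i : Fin m, (X i : Pm m) ^ 2)) : Module.End ℝ (Pm m))
      * LinearMap.mulLeft ℝ (X x)
      = LinearMap.mulLeft ℝ (X x) * LinearMap.mulLeft ℝ (-(∑ i : Fin m, (X i : Pm m) ^ 2)) := by
    rw [Module.End.mul_eq_comp, Module.End.mul_eq_comp, ← LinearMap.mulLeft_mul,
      ← LinearMap.mulLeft_mul, mul_comm]
  rw [hf]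
  simp only [Module.End.mul_eq_comp, LinearMap.comp_id, LinearMap.id_comp]

lemma Mx2_xWedge : Mx2 m * xWedge m = xWedge m * Mx2 m := by
  unfold xWedge; exact Mx2_comm_sum _

lemma Mx2_xDot : Mx2 m * xDot m = xDot m * Mx2 m := by
  unfold xDot; exact Mx2_comm_sum _

lemma neg2_smul_eq (A : Module.End ℝ (MS m)) : (-2:ℝ) • A = -(A + A) := by module

lemma d_Mx2_gen (u : Fin m → Module.End ℝ (Cl m)) :
    (∑ x : Fin m, op m (pderiv x).toLinearMap (u x)) * Mx2 m
    = Mx2 m * (∑ x : Fin m, op m (pderiv x).toLinearMap (u x))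
      - ((∑ x : Fin m, op m (LinearMap.mulLeft ℝ (X x)) (u x))
        + (∑ x : Fin m, op m (LinearMap.mulLeft ℝ (X x)) (u x))) := by
  unfold Mx2
  rw [Finset.sum_mul, Finset.mul_sum]
  have key : ∀ x : Fin m,
      op m (pderiv x).toLinearMap (u x) *
        op m (LinearMap.mulLeft ℝ (-(∑ i : Fin m, (X i : Pm m) ^ 2))) LinearMap.id
      = op m (LinearMap.mulLeft ℝ (-(∑ i : Fin m, (X i : Pm m) ^ 2))) LinearMap.id *
          op m (pderiv x).toLinearMap (u x)
        + (-2:ℝ) • op m (LinearMap.mulLeft ℝ (X x)) (u x) := by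
    intro x
    rw [op_mul, op_mul, Dq x (-(∑ i : Fin m, (X i : Pm m) ^ 2)), op_add_left, pd_p,
      mulLeft_smul, op_smul_left]
    simp only [Module.End.mul_eq_comp, LinearMap.comp_id, LinearMap.id_comp]
  rw [Finset.sum_congr rfl fun x _ => key x, Finset.sum_add_distrib]
  have h2 : (∑ x : Fin m, (-2:ℝ) • op m (LinearMap.mulLeft ℝ (X x)) (u x))
      = -((∑ x : Fin m, op m (LinearMap.mulLeft ℝ (X x)) (u x))
          + (∑ x : Fin m, op m (LinearMap.mulLeft ℝ (X x)) (u x))) := by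
    rw [Finset.sum_congr rfl fun x _ => neg2_smul_eq (op m (LinearMap.mulLeft ℝ (X x)) (u x)),
      ← Finset.sum_add_distrib]
    exact Finset.sum_neg_distrib (G := Module.End ℝ (MS m)) _
  rw [h2]
  abel

lemma dplus_Mx2 : dplus m * Mx2 m = Mx2 m * dplus m - (xWedge m + xWedge m) := by
  unfold dplus xWedge; exact d_Mx2_gen _

lemma dminus_Mx2 : dminus m * Mx2 m = Mx2 m * dminus m - (xDot m + xDot m) := by
  unfold dminus xDot; exact d_Mx2_gen _

lemma Xmul_eq : Xmul m = xWedge m + xDot m := by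
  unfold Xmul xWedge xDot
  rw [← Finset.sum_add_distrib]
  refine Finset.sum_congr rfl fun x _ => ?_
  rw [← op_add_right]
  congr 1
  unfold wedgeL dotL
  module

/-! ### the abstract commutator computation -/

lemma key_comm {R : Type*} [Ring R] (dp W D M A : R)
    (hWW : W * W = 0) (hDD : D * D = 0)
    (hpW : dp * W = -(W * dp))
    (hpD : dp * D = -A - D * dp)
    (hpM : dp * M = M * dp - (W + W))
    (hMW : M * W = W * M) :
    ∀ j : ℕ, dp * (M ^ j * (W + D) * D) - M ^ j * (W + D) * D * dp = M ^ j * W * A := by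
  intro j
  induction j with
  | zero =>
    simp only [pow_zero, one_mul]
    have hXD : (W + D) * D = W * D := by rw [add_mul, hDD, add_zero]
    rw [hXD]
    have h1 : dp * (W * D) = W * A + W * D * dp := by
      calc dp * (W * D) = (dp * W) * D := by rw [mul_assoc]
        _ = (-(W * dp)) * D := by rw [hpW]
        _ = -(W * (dp * D)) := by rw [neg_mul, mul_assoc]
        _ = -(W * (-A - D * dp)) := by rw [hpD]
        _ = W * A + W * D * dp := by noncomm_ring
    rw [h1]
    abel
  | succ n ih =>
    have hMnW : M ^ n * W = W * M ^ n := ((Commute.pow_left hMW n) : _)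
    have h0 : M ^ (n+1) * (W + D) * D = M * (M ^ n * (W + D) * D) := by
      rw [pow_succ']; noncomm_ring
    rw [h0]
    have hWC : W * (M ^ n * (W + D) * D) = 0 := by
      have h1 : W * ((W + D) * D) = 0 := by
        calc W * ((W + D) * D) = W * (W * D) := by rw [add_mul, hDD, add_zero]
          _ = (W * W) * D := by rw [mul_assoc]
          _ = 0 := by rw [hWW, zero_mul]
      calc W * (M ^ n * (W + D) * D) = (W * M ^ n) * ((W + D) * D) := by noncomm_ring
        _ = (M ^ n * W) * ((W + D) * D) := by rw [← hMnW]
        _ = M ^ n * (W * ((W + D) * D)) := by rw [mul_assoc]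
        _ = 0 := by rw [h1, mul_zero]
    calc dp * (M * (M ^ n * (W + D) * D)) - M * (M ^ n * (W + D) * D) * dp
        = (dp * M) * (M ^ n * (W + D) * D) - M * ((M ^ n * (W + D) * D) * dp) := by
          noncomm_ring
      _ = (M * dp - (W + W)) * (M ^ n * (W + D) * D) - M * ((M ^ n * (W + D) * D) * dp) := by
          rw [hpM]
      _ = M * (dp * (M ^ n * (W + D) * D) - (M ^ n * (W + D) * D) * dp)
            - (W * (M ^ n * (W + D) * D) + W * (M ^ n * (W + D) * D)) := by noncomm_ring
      _ = M * (M ^ n * W * A) - (0 + 0) := by rw [ih, hWC]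
      _ = M ^ (n+1) * W * A := by rw [pow_succ']; noncomm_ring

end AuxStmt11

end AuxStmt11

/-- on k-homogeneous Cl^s-valued polynomials,
[∂⁺, x^{2j+1}(x•)] = x^{2j}(x∧)A and [∂⁻, x^{2j+1}(x∧)] = x^{2j}(x•)B. -/
theorem stmt11 (m j k s : ℕ) (P : MS m) (hP : P ∈ Pks m k s) :
    (dplus m * (Mx2 m ^ j * Xmul m * xDot m) - Mx2 m ^ j * Xmul m * xDot m * dplus m) P =
      (Mx2 m ^ j * xWedge m * (Euler m + fermPlus m)) P ∧
    (dminus m * (Mx2 m ^ j * Xmul m * xWedge m) - Mx2 m ^ j * Xmul m * xWedge m * dminus m) P =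
      (Mx2 m ^ j * xDot m * (Euler m + fermMinus m)) P := by
  constructor
  · have h1 := AuxStmt11.key_comm (dplus m) (xWedge m) (xDot m) (Mx2 m)
      (Euler m + fermPlus m) AuxStmt11.xWedge_sq AuxStmt11.xDot_sq
      (eq_neg_of_add_eq_zero_left (AuxStmt11.dplus_xWedge (m := m)))
      (eq_sub_of_add_eq (AuxStmt11.dplus_xDot (m := m)))
      AuxStmt11.dplus_Mx2 AuxStmt11.Mx2_xWedge j
    rw [← AuxStmt11.Xmul_eq] at h1
    exact LinearMap.congr_fun h1 P
  · have h2 := AuxStmt11.key_comm (dminus m) (xDot m) (xWedge m) (Mx2 m)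
      (Euler m + fermMinus m) AuxStmt11.xDot_sq AuxStmt11.xWedge_sq
      (eq_neg_of_add_eq_zero_left (AuxStmt11.dminus_xDot (m := m)))
      (eq_sub_of_add_eq (AuxStmt11.dminus_xWedge (m := m)))
      AuxStmt11.dminus_Mx2 AuxStmt11.Mx2_xDot j
    rw [add_comm (xDot m) (xWedge m), ← AuxStmt11.Xmul_eq] at h2
    exact LinearMap.congr_fun h2 P
end

section
/- If P is a k-homogeneous Cl^s-valued polynomial solution of the Hodge-de Rham system (∂^+P = 0 and ∂^-P = 0) with s ∈ {0, m} and k ≥ 1, then P = 0. Moreover H_0^0 = ℝ and H_0^m = ℝ·e_M where e_M = e_1e_2⋯e_m. -/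
noncomputable section
open CliffordAlgebra

lemma Qf_single (m : ℕ) (i : Fin m) : Qf m (Pi.single i 1) = -1 := by
  simp [Qf, QuadraticMap.weightedSumSquares_apply, Pi.single_apply]

lemma e_sq (m : ℕ) (i : Fin m) : e m i * e m i = -1 := by
  rw [e, ι_sq_scalar, Qf_single]; simp

lemma e_anticomm {m : ℕ} {i j : Fin m} (h : i ≠ j) :
    e m i * e m j = -(e m j * e m i) := by
  have hp : QuadraticMap.polar (Qf m) (Pi.single i 1) (Pi.single j 1) = 0 := by
    have key : ∀ x : Fin m,
        (((Pi.single i 1 : Fin m → ℝ) x + (Pi.single j 1 : Fin m → ℝ) x) * ((Pi.single i 1 : Fin m → ℝ) x + (Pi.single j 1 : Fin m → ℝ) x) : ℝ) =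
          (Pi.single i 1 : Fin m → ℝ) x * (Pi.single i 1 : Fin m → ℝ) x + (Pi.single j 1 : Fin m → ℝ) x * (Pi.single j 1 : Fin m → ℝ) x := by
      intro x
      rcases eq_or_ne x i with rfl | hi <;> rcases eq_or_ne x j with rfl | hj <;>
        simp_all [Pi.single_apply]
    simp only [QuadraticMap.polar, Qf, QuadraticMap.neg_apply,
      QuadraticMap.weightedSumSquares_apply, smul_eq_mul, one_mul, Pi.add_apply]
    rw [Finset.sum_congr rfl (fun x _ => key x), Finset.sum_add_distrib]
    ring
  have h2 := ι_mul_ι_add_swap (Q := Qf m) (Pi.single i 1) (Pi.single j 1)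
  rw [hp, map_zero] at h2
  rw [e, e]
  exact eq_neg_of_add_eq_zero_left h2

/-- product of generators along a list -/
def pr (m : ℕ) (l : List (Fin m)) : Cl m := (l.map (e m)).prod

@[simp] lemma pr_nil (m : ℕ) : pr m [] = 1 := rfl
@[simp] lemma pr_cons (m : ℕ) (a : Fin m) (l : List (Fin m)) :
    pr m (a :: l) = e m a * pr m l := by simp [pr]

lemma e_mul_pr (m : ℕ) (i : Fin m) (l : List (Fin m)) :
    e m i * pr m l = ((-1 : ℝ) ^ (l.countP (fun k => k ≠ i))) • (pr m l * e m i) := by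
  induction l with
  | nil => simp
  | cons a t ih =>
    rcases eq_or_ne a i with rfl | ha
    · have hc : (a :: t).countP (fun k => k ≠ a) = t.countP (fun k => k ≠ a) := by
        simp [List.countP_cons]
      rw [hc, pr_cons]
      calc e m a * (e m a * pr m t)
          = e m a * ((-1 : ℝ) ^ (t.countP (fun k => k ≠ a)) • (pr m t * e m a)) := by rw [ih]
        _ = (-1 : ℝ) ^ (t.countP (fun k => k ≠ a)) • (e m a * (pr m t * e m a)) :=
            mul_smul_comm _ _ _
        _ = (-1 : ℝ) ^ (t.countP (fun k => k ≠ a)) • (e m a * pr m t * e m a) := by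
            rw [mul_assoc]
    · have hc : (a :: t).countP (fun k => k ≠ i) = t.countP (fun k => k ≠ i) + 1 := by
        simp [List.countP_cons, ha]
      rw [hc, pr_cons]
      calc e m i * (e m a * pr m t)
          = (e m i * e m a) * pr m t := by rw [mul_assoc]
        _ = -((e m a * e m i) * pr m t) := by rw [e_anticomm ha.symm, neg_mul]
        _ = -(e m a * (e m i * pr m t)) := by rw [mul_assoc]
        _ = -(e m a * ((-1 : ℝ) ^ (t.countP (fun k => k ≠ i)) • (pr m t * e m i))) := by
            rw [ih]
        _ = -((-1 : ℝ) ^ (t.countP (fun k => k ≠ i)) • (e m a * (pr m t * e m i))) := by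
            rw [mul_smul_comm]
        _ = ((-1 : ℝ) ^ (t.countP (fun k => k ≠ i) + 1)) • (e m a * pr m t * e m i) := by
            rw [← mul_assoc, pow_succ, ← neg_smul]
            congr 1
            ring

lemma involute_pr (m : ℕ) (l : List (Fin m)) :
    involute (Q := Qf m) (pr m l) = ((-1 : ℝ) ^ l.length) • pr m l := by
  induction l with
  | nil => simp
  | cons a t ih =>
    rw [pr_cons, map_mul, ih, e, involute_ι, List.length_cons, pow_succ]
    rw [mul_smul_comm, ← e, neg_mul, smul_neg, ← neg_smul]
    congr 1
    ring

lemma pr_perm {m : ℕ} {l l' : List (Fin m)} (h : l.Perm l') (hn : l.Nodup) :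
    pr m l = pr m l' ∨ pr m l = -pr m l' := by
  induction h with
  | nil => exact Or.inl rfl
  | cons x h ih =>
    rcases ih (List.Nodup.of_cons hn) with h1 | h1
    · exact Or.inl (by rw [pr_cons, pr_cons, h1])
    · exact Or.inr (by rw [pr_cons, pr_cons, h1, mul_neg])
  | swap x y t =>
    have hxy : y ≠ x := by
      simp only [List.nodup_cons, List.mem_cons] at hn
      exact fun hxx => hn.1 (Or.inl hxx)
    right
    rw [pr_cons, pr_cons, pr_cons, pr_cons, ← mul_assoc, ← mul_assoc,
      e_anticomm hxy, neg_mul]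
  | trans h1 h2 ih1 ih2 =>
    have hn2 := h1.nodup hn
    rcases ih1 hn with ha | ha <;> rcases ih2 hn2 with hb | hb
    · exact Or.inl (ha.trans hb)
    · exact Or.inr (ha.trans hb)
    · exact Or.inr (by rw [ha, hb])
    · exact Or.inl (by rw [ha, hb, neg_neg])

lemma countP_ne_of_nodup {m : ℕ} {l : List (Fin m)} {i : Fin m} (hn : l.Nodup)
    (hi : i ∈ l) : l.countP (fun k => k ≠ i) + 1 = l.length := by
  induction l with
  | nil => simp at hi
  | cons a t ih =>
    rcases eq_or_ne a i with rfl | ha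
    · have hat : a ∉ t := (List.nodup_cons.mp hn).1
      have h1 : t.countP (fun k => k ≠ a) = t.length :=
        List.countP_eq_length.mpr (fun x hx => by
          simp only [decide_eq_true_eq]
          exact fun hxa => hat (hxa ▸ hx))
      have hc : (a :: t).countP (fun k => k ≠ a) = t.countP (fun k => k ≠ a) := by
        simp [List.countP_cons]
      rw [hc, h1, List.length_cons]
    · have hit : i ∈ t := by
        rcases List.mem_cons.mp hi with h1 | h1
        · exact absurd h1.symm ha
        · exact h1
      have hc : (a :: t).countP (fun k => k ≠ i) = t.countP (fun k => k ≠ i) + 1 := by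
        simp [List.countP_cons, ha]
      rw [hc, List.length_cons, ← ih (List.Nodup.of_cons hn) hit]

lemma pr_sq {m : ℕ} {l : List (Fin m)} (hn : l.Nodup) :
    ∃ μ : ℝ, (μ = 1 ∨ μ = -1) ∧ pr m l * pr m l = μ • 1 := by
  induction l with
  | nil => exact ⟨1, Or.inl rfl, by simp⟩
  | cons a t ih =>
    obtain ⟨μ, hμ, hsq⟩ := ih (List.Nodup.of_cons hn)
    have hat : a ∉ t := (List.nodup_cons.mp hn).1
    have hcount : t.countP (fun k => k ≠ a) = t.length :=
      List.countP_eq_length.mpr (fun x hx => by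
        simp only [decide_eq_true_eq]
        exact fun hxa => hat (hxa ▸ hx))
    have hmove : e m a * pr m t = ((-1 : ℝ) ^ t.length) • (pr m t * e m a) := by
      rw [e_mul_pr, hcount]
    have hm2 : ((-1 : ℝ) ^ t.length) * ((-1 : ℝ) ^ t.length) = 1 := by
      rw [← pow_add]
      exact Even.neg_one_pow ⟨t.length, rfl⟩
    have hmove' : pr m t * e m a = ((-1 : ℝ) ^ t.length) • (e m a * pr m t) := by
      rw [hmove, smul_smul, hm2, one_smul]
    refine ⟨(-1 : ℝ) ^ t.length * (-1) * μ, ?_, ?_⟩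
    · rcases neg_one_pow_eq_or ℝ t.length with h | h <;> rcases hμ with h2 | h2 <;>
        rw [h, h2] <;> norm_num
    · rw [pr_cons]
      calc (e m a * pr m t) * (e m a * pr m t)
          = e m a * ((pr m t * e m a) * pr m t) := by
            rw [mul_assoc, ← mul_assoc (pr m t)]
        _ = e m a * ((((-1 : ℝ) ^ t.length) • (e m a * pr m t)) * pr m t) := by
            rw [hmove']
        _ = ((-1 : ℝ) ^ t.length) • (e m a * (e m a * (pr m t * pr m t))) := by
            rw [smul_mul_assoc, mul_smul_comm, mul_assoc]
        _ = ((-1 : ℝ) ^ t.length) • (μ • (e m a * e m a)) := by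
            rw [hsq, mul_smul_comm, mul_one, mul_smul_comm]
        _ = ((-1 : ℝ) ^ t.length) • (μ • (-1 : Cl m)) := by rw [e_sq]
        _ = ((-1 : ℝ) ^ t.length * (-1) * μ) • (1 : Cl m) := by
            rw [smul_neg, smul_neg, smul_smul, ← neg_smul]
            congr 1
            ring

lemma wedgeL_apply (m : ℕ) (c v : Cl m) :
    wedgeL m c v = (1/2 : ℝ) • (c * v + involute (Q := Qf m) v * c) := by
  simp [wedgeL]

lemma dotL_apply (m : ℕ) (c v : Cl m) :
    dotL m c v = (1/2 : ℝ) • (c * v - involute (Q := Qf m) v * c) := by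
  simp [dotL]

lemma perm_finRange {m : ℕ} {l : List (Fin m)} (hn : l.Nodup) (hl : l.length = m) :
    l.Perm (List.finRange m) := by
  refine (hn.subperm fun x _ => List.mem_finRange x).perm_of_length_le ?_
  rw [List.length_finRange, hl]

lemma clGrade_zero (m : ℕ) : clGrade m 0 = (Submodule.span ℝ {(1 : Cl m)}) := by
  unfold clGrade
  congr 1
  ext x
  constructor
  · rintro ⟨l, hl, -, rfl⟩
    rw [List.length_eq_zero_iff] at hl
    subst hl
    simp [pr]
  · rintro rfl
    exact ⟨[], rfl, List.nodup_nil, rfl⟩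

lemma clGrade_top (m : ℕ) :
    clGrade m m = Submodule.span ℝ {pr m (List.finRange m)} := by
  apply le_antisymm
  · rw [clGrade, Submodule.span_le]
    rintro x ⟨l, hl, hnd, rfl⟩
    have hperm := perm_finRange hnd hl
    rcases pr_perm hperm hnd with h | h
    · rw [show (l.map (e m)).prod = pr m l from rfl, h]
      exact Submodule.mem_span_singleton_self _
    · rw [show (l.map (e m)).prod = pr m l from rfl, h]
      exact Submodule.neg_mem _ (Submodule.mem_span_singleton_self _)
  · rw [Submodule.span_le, Set.singleton_subset_iff]
    exact Submodule.subset_span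
      ⟨List.finRange m, List.length_finRange, List.nodup_finRange m, rfl⟩

lemma eM_key (m : ℕ) (j : Fin m) (w : Cl m) :
    involute (Q := Qf m) (w * pr m (List.finRange m)) * e m j
      = -(involute (Q := Qf m) w * e m j * pr m (List.finRange m)) := by
  set eM := pr m (List.finRange m) with heM
  set n := (List.finRange m).countP (fun k => k ≠ j) with hnn
  have hn : n + 1 = m := by
    rw [hnn]
    rw [countP_ne_of_nodup (List.nodup_finRange m) (List.mem_finRange j),
      List.length_finRange]
  have hm2 : ((-1 : ℝ) ^ n) * ((-1 : ℝ) ^ n) = 1 := by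
    rw [← pow_add]
    exact Even.neg_one_pow ⟨n, rfl⟩
  have h1 : eM * e m j = ((-1 : ℝ) ^ n) • (e m j * eM) := by
    rw [e_mul_pr, ← hnn, smul_smul, hm2, one_smul]
  calc involute (Q := Qf m) (w * eM) * e m j
      = ((-1 : ℝ) ^ m • (involute (Q := Qf m) w * eM)) * e m j := by
        rw [map_mul, heM, involute_pr, List.length_finRange, mul_smul_comm]
    _ = (-1 : ℝ) ^ m • (involute (Q := Qf m) w * (eM * e m j)) := by
        rw [smul_mul_assoc, mul_assoc]
    _ = ((-1 : ℝ) ^ m * (-1 : ℝ) ^ n) • (involute (Q := Qf m) w * (e m j * eM)) := by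
        rw [h1, mul_smul_comm, smul_smul]
    _ = -(involute (Q := Qf m) w * e m j * eM) := by
        rw [← pow_add]
        have hodd : (-1 : ℝ) ^ (m + n) = -1 := by
          rw [← hn]
          exact Odd.neg_one_pow ⟨n, by ring⟩
        rw [hodd, neg_one_smul, mul_assoc]

lemma wedgeL_eM (m : ℕ) (j : Fin m) (w : Cl m) :
    wedgeL m (e m j) (w * pr m (List.finRange m))
      = dotL m (e m j) w * pr m (List.finRange m) := by
  rw [wedgeL_apply, dotL_apply, eM_key, ← mul_assoc, ← sub_eq_add_neg,
    smul_mul_assoc, sub_mul]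

lemma dotL_eM (m : ℕ) (j : Fin m) (w : Cl m) :
    dotL m (e m j) (w * pr m (List.finRange m))
      = wedgeL m (e m j) w * pr m (List.finRange m) := by
  rw [dotL_apply, wedgeL_apply, eM_key, sub_neg_eq_add, ← mul_assoc,
    smul_mul_assoc, add_mul]

open MvPolynomial in
lemma euler_monomial (m : ℕ) (d : Fin m →₀ ℕ) (r : ℝ) :
    ∑ j : Fin m, X j * pderiv j (monomial d r) = (∑ j : Fin m, d j) • monomial d r := by
  rw [Finset.sum_smul]
  refine Finset.sum_congr rfl fun j _ => ?_
  rw [pderiv_monomial]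
  rcases Nat.eq_zero_or_pos (d j) with h0 | hpos
  · rw [h0]
    simp
  · have hd : Finsupp.single j 1 + (d - Finsupp.single j 1) = d := by
      ext x
      rcases eq_or_ne x j with rfl | hx
      · simp [Finsupp.single_apply]
        omega
      · simp [Finsupp.single_apply, hx, Ne.symm hx]
    rw [X, monomial_mul, one_mul, hd]
    rw [show (monomial d) (r * (d j : ℝ)) = (d j : ℝ) • monomial d r by
      rw [smul_monomial, smul_eq_mul, mul_comm]]
    rw [← Nat.cast_smul_eq_nsmul ℝ]

open MvPolynomial in
lemma euler_identity {m k : ℕ} {p : Pm m} (hp : p.IsHomogeneous k) :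
    ∑ j : Fin m, X j * pderiv j p = (k : ℝ) • p := by
  conv_lhs => rw [p.as_sum]
  conv_rhs => rw [p.as_sum]
  rw [Finset.smul_sum]
  simp only [map_sum, Finset.mul_sum]
  rw [Finset.sum_comm]
  refine Finset.sum_congr rfl fun d hd => ?_
  rw [euler_monomial]
  have hdeg : (∑ j : Fin m, d j) = k := by
    have h1 := hp (mem_support_iff.mp hd)
    rw [← h1, Finsupp.weight_apply, Finsupp.sum]
    rw [Finset.sum_subset (Finset.subset_univ d.support)
      (fun x _ hx => by simp [Finsupp.notMem_support_iff.mp hx])]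
    simp [Pi.one_apply]
  rw [hdeg, ← Nat.cast_smul_eq_nsmul ℝ]

open MvPolynomial in
lemma dplus_tmul (m : ℕ) (p : Pm m) (c : Cl m) :
    dplus m (p ⊗ₜ[ℝ] c) = ∑ j : Fin m, (pderiv j p) ⊗ₜ[ℝ] (wedgeL m (e m j) c) := by
  simp [dplus, op, LinearMap.sum_apply]

open MvPolynomial in
lemma dminus_tmul (m : ℕ) (p : Pm m) (c : Cl m) :
    dminus m (p ⊗ₜ[ℝ] c) = ∑ j : Fin m, (pderiv j p) ⊗ₜ[ℝ] (dotL m (e m j) c) := by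
  simp [dminus, op, LinearMap.sum_apply]

open MvPolynomial in
lemma xDot_tmul (m : ℕ) (p : Pm m) (c : Cl m) :
    xDot m (p ⊗ₜ[ℝ] c) = ∑ j : Fin m, (X j * p) ⊗ₜ[ℝ] (dotL m (e m j) c) := by
  simp [xDot, op, LinearMap.sum_apply]

lemma wedgeL_one (m : ℕ) (j : Fin m) : wedgeL m (e m j) 1 = e m j := by
  rw [wedgeL_apply, mul_one, map_one, one_mul, ← two_smul ℝ, smul_smul]
  norm_num

lemma involute_e (m : ℕ) (j : Fin m) : involute (Q := Qf m) (e m j) = -(e m j) := by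
  rw [e, involute_ι]

lemma dotL_e_same (m : ℕ) (j : Fin m) : dotL m (e m j) (e m j) = -1 := by
  rw [dotL_apply, involute_e, neg_mul, sub_neg_eq_add, e_sq, ← two_smul ℝ, smul_smul]
  norm_num

lemma dotL_e_ne {m : ℕ} {i j : Fin m} (h : i ≠ j) : dotL m (e m i) (e m j) = 0 := by
  rw [dotL_apply, involute_e, neg_mul, sub_neg_eq_add, e_anticomm h]
  simp

open MvPolynomial in
lemma core0 {m k : ℕ} {p : Pm m} (hp : p.IsHomogeneous k) (hk : 1 ≤ k)
    (h : dplus m (p ⊗ₜ[ℝ] (1 : Cl m)) = 0) : p ⊗ₜ[ℝ] (1 : Cl m) = (0 : MS m) := by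
  have hcalc : xDot m (dplus m (p ⊗ₜ[ℝ] (1 : Cl m)))
      = -(((k : ℝ) • p) ⊗ₜ[ℝ] (1 : Cl m)) := by
    rw [dplus_tmul]
    simp only [wedgeL_one, map_sum, xDot_tmul]
    have hterm : ∀ j : Fin m,
        (∑ i : Fin m, (X i * pderiv j p) ⊗ₜ[ℝ] (dotL m (e m i) (e m j)))
          = -((X j * pderiv j p) ⊗ₜ[ℝ] (1 : Cl m)) := by
      intro j
      rw [Finset.sum_eq_single j
        (fun i _ hij => by rw [dotL_e_ne hij, TensorProduct.tmul_zero])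
        (fun hj => absurd (Finset.mem_univ j) hj)]
      rw [dotL_e_same, TensorProduct.tmul_neg]
    rw [Finset.sum_congr rfl fun j _ => hterm j, Finset.sum_neg_distrib,
      ← TensorProduct.sum_tmul, euler_identity hp]
  rw [h, LinearMap.map_zero] at hcalc
  have h2 : ((k : ℝ) • p) ⊗ₜ[ℝ] (1 : Cl m) = (0 : MS m) := by
    rw [← neg_eq_zero, hcalc]
  rw [← TensorProduct.smul_tmul'] at h2
  have hne : (k : ℝ) ≠ 0 := Nat.cast_ne_zero.mpr (by omega)
  calc p ⊗ₜ[ℝ] (1 : Cl m) = (k : ℝ)⁻¹ • ((k : ℝ) • (p ⊗ₜ[ℝ] (1 : Cl m))) := by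
        rw [smul_smul, inv_mul_cancel₀ hne, one_smul]
    _ = 0 := by rw [h2, smul_zero]

open MvPolynomial in
lemma corem {m k : ℕ} {p : Pm m} (hp : p.IsHomogeneous k) (hk : 1 ≤ k)
    (h : dminus m (p ⊗ₜ[ℝ] pr m (List.finRange m)) = 0) :
    p ⊗ₜ[ℝ] pr m (List.finRange m) = (0 : MS m) := by
  obtain ⟨μ, hμ, hsq⟩ := pr_sq (List.nodup_finRange m)
  have hμne : μ ≠ 0 := by rcases hμ with h1 | h1 <;> rw [h1] <;> norm_num
  set T : MS m →ₗ[ℝ] MS m :=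
    LinearMap.lTensor (Pm m) (LinearMap.mulRight ℝ (pr m (List.finRange m))) with hT
  have key : dminus m (p ⊗ₜ[ℝ] pr m (List.finRange m))
      = T (dplus m (p ⊗ₜ[ℝ] (1 : Cl m))) := by
    rw [dminus_tmul, dplus_tmul, map_sum]
    refine Finset.sum_congr rfl fun j _ => ?_
    rw [hT, LinearMap.lTensor_tmul, LinearMap.mulRight_apply, wedgeL_one]
    have hd := dotL_eM m j 1
    rw [one_mul, wedgeL_one] at hd
    rw [hd]
  have hTT : T ∘ₗ T = μ • LinearMap.id := by
    rw [hT, ← LinearMap.lTensor_comp]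
    have hcomp : LinearMap.mulRight ℝ (pr m (List.finRange m)) ∘ₗ
        LinearMap.mulRight ℝ (pr m (List.finRange m))
        = μ • (LinearMap.id : Cl m →ₗ[ℝ] Cl m) := by
      ext c
      simp only [LinearMap.comp_apply, LinearMap.mulRight_apply, LinearMap.smul_apply,
        LinearMap.id_apply]
      rw [mul_assoc, hsq, mul_smul_comm, mul_one]
    rw [hcomp, LinearMap.lTensor_smul, LinearMap.lTensor_id]
  have h2 : μ • dplus m (p ⊗ₜ[ℝ] (1 : Cl m)) = 0 := by
    have := congrArg T h
    rw [key, LinearMap.map_zero, ← LinearMap.comp_apply, hTT, LinearMap.smul_apply,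
      LinearMap.id_apply] at this
    exact this
  have h3 : dplus m (p ⊗ₜ[ℝ] (1 : Cl m)) = 0 := by
    calc dplus m (p ⊗ₜ[ℝ] (1 : Cl m)) = μ⁻¹ • (μ • dplus m (p ⊗ₜ[ℝ] (1 : Cl m))) := by
          rw [smul_smul, inv_mul_cancel₀ hμne, one_smul]
      _ = 0 := by rw [h2, smul_zero]
  have h4 := core0 hp hk h3
  have h5 : p ⊗ₜ[ℝ] pr m (List.finRange m) = T (p ⊗ₜ[ℝ] (1 : Cl m)) := by
    rw [hT, LinearMap.lTensor_tmul, LinearMap.mulRight_apply, one_mul]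
  rw [h5, h4, LinearMap.map_zero]

open MvPolynomial in
lemma rep {m k s : ℕ} {c : Cl m} (hc : clGrade m s = Submodule.span ℝ {c})
    {P : MS m} (hP : P ∈ Pks m k s) :
    ∃ p : Pm m, p.IsHomogeneous k ∧ P = p ⊗ₜ[ℝ] c := by
  obtain ⟨t, rfl⟩ := hP
  induction t with
  | zero =>
    exact ⟨0, isHomogeneous_zero _ _ _, by rw [LinearMap.map_zero, TensorProduct.zero_tmul]⟩
  | tmul q d =>
    have hd : (d : Cl m) ∈ Submodule.span ℝ {c} := hc ▸ d.2
    obtain ⟨r, hr⟩ := Submodule.mem_span_singleton.mp hd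
    refine ⟨r • (q : Pm m), ?_, ?_⟩
    · exact (mem_homogeneousSubmodule _ _).mp
        (Submodule.smul_mem _ r q.2)
    · rw [TensorProduct.map_tmul, Submodule.coe_subtype, Submodule.coe_subtype, ← hr,
        TensorProduct.tmul_smul, TensorProduct.smul_tmul']
  | add x y ihx ihy =>
    obtain ⟨p1, hp1, he1⟩ := ihx
    obtain ⟨p2, hp2, he2⟩ := ihy
    exact ⟨p1 + p2, hp1.add hp2,
      by rw [LinearMap.map_add, he1, he2, TensorProduct.add_tmul]⟩

open MvPolynomial in
lemma homog_zero_rep {m : ℕ} {p : Pm m} (hp : p.IsHomogeneous 0) :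
    p = (p.coeff 0) • (1 : Pm m) := by
  have h1 : homogeneousComponent 0 p = p := by
    have h2 := homogeneousComponent_of_mem (m := 0) (n := 0)
      ((mem_homogeneousSubmodule _ _).mpr hp)
    simpa using h2
  conv_lhs => rw [← h1, homogeneousComponent_zero]
  rw [smul_eq_C_mul, mul_one]

open MvPolynomial in
lemma one_mem_hs0 (m : ℕ) : (1 : Pm m) ∈ homogeneousSubmodule (Fin m) ℝ 0 :=
  (mem_homogeneousSubmodule _ _).mpr (isHomogeneous_one _ _)

open MvPolynomial in
lemma tmul_mem_Pks {m k s : ℕ} {p : Pm m} {c : Cl m}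
    (hp : p ∈ homogeneousSubmodule (Fin m) ℝ k) (hc : c ∈ clGrade m s) :
    p ⊗ₜ[ℝ] c ∈ Pks m k s :=
  ⟨(⟨p, hp⟩ : homogeneousSubmodule (Fin m) ℝ k) ⊗ₜ[ℝ] (⟨c, hc⟩ : clGrade m s), by
    rw [TensorProduct.map_tmul]; rfl⟩

lemma one_mem_clGrade0 (m : ℕ) : (1 : Cl m) ∈ clGrade m 0 := by
  rw [clGrade_zero]
  exact Submodule.mem_span_singleton_self _

lemma eM_mem_clGradeTop (m : ℕ) : pr m (List.finRange m) ∈ clGrade m m := by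
  rw [clGrade_top]
  exact Submodule.mem_span_singleton_self _

open MvPolynomial in
lemma dplus_one_tmul (m : ℕ) (c : Cl m) : dplus m ((1 : Pm m) ⊗ₜ[ℝ] c) = 0 := by
  rw [dplus_tmul]
  simp [pderiv_one]

open MvPolynomial in
lemma dminus_one_tmul (m : ℕ) (c : Cl m) : dminus m ((1 : Pm m) ⊗ₜ[ℝ] c) = 0 := by
  rw [dminus_tmul]
  simp [pderiv_one]

open MvPolynomial in
lemma Hks_zero (m : ℕ) (c : Cl m) (s : ℕ) (hc : clGrade m s = Submodule.span ℝ {c})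
    (hcm : c ∈ clGrade m s) :
    Hks m 0 s = Submodule.span ℝ {((1 : Pm m) ⊗ₜ[ℝ] c : MS m)} := by
  apply le_antisymm
  · intro P hP
    obtain ⟨p, hp, rfl⟩ := rep hc hP.1.1
    rw [homog_zero_rep hp, ← TensorProduct.smul_tmul']
    exact Submodule.smul_mem _ _ (Submodule.mem_span_singleton_self _)
  · rw [Submodule.span_le, Set.singleton_subset_iff]
    refine ⟨⟨tmul_mem_Pks (one_mem_hs0 m) hcm, ?_⟩, ?_⟩
    · exact LinearMap.mem_ker.mpr (dplus_one_tmul m c)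
    · exact LinearMap.mem_ker.mpr (dminus_one_tmul m c)

end
/-- if P ∈ H_k^s with s ∈ {0,m} and k ≥ 1 then P = 0; moreover
H_0^0 = ℝ·1 and H_0^m = ℝ·e_M with e_M = e₁e₂⋯e_m. -/
theorem stmt15 (m k s : ℕ) :
    (∀ P ∈ Pks m k s, (s = 0 ∨ s = m) → 1 ≤ k →
      dplus m P = 0 → dminus m P = 0 → P = 0) ∧
    Hks m 0 0 = Submodule.span ℝ {((1 : Pm m) ⊗ₜ[ℝ] (1 : Cl m) : MS m)} ∧
    Hks m 0 m = Submodule.span ℝ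
      {((1 : Pm m) ⊗ₜ[ℝ] (((List.finRange m).map (e m)).prod) : MS m)} := by
  refine ⟨?_, ?_, ?_⟩
  · rintro P hP hs hk hdp hdm
    rcases hs with rfl | hs
    · obtain ⟨p, hp, rfl⟩ := rep (clGrade_zero m) hP
      exact core0 hp hk hdp
    · rw [hs] at hP
      obtain ⟨p, hp, rfl⟩ := rep (clGrade_top m) hP
      exact corem hp hk hdm
  · exact Hks_zero m 1 0 (clGrade_zero m) (one_mem_clGrade0 m)
  · exact Hks_zero m (pr m (List.finRange m)) m (clGrade_top m) (eM_mem_clGradeTop m)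
end
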